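/- arXiv:1204.6643 — 4 statements merged into one kernel-verified Lean document; each statement's English description precedes it below -/
import Mathlib

section
/- Nonlinear error representation: Suppose u ∈ V solves the primal problem F(u; v) = 0 for all v ∈ V̂, let u_h ∈ V, and suppose z ∈ V̂ satisfies the averaged dual problem: ∫₀¹ D₁F(s·u + (1−s)·u_h; z)(w) ds = ∫₀¹ DM(s·u + (1−s)·u_h)(w) ds for all w in a linear subspace V₀ of V with u − u_h ∈ V₀, where D₁F(·; v) denotes the Fréchet derivative of w ↦ F(w; v) and DM the Fréchet derivative of M. Then M(u) − M(u_h) = −F(u_h; z); that is, the error in the goal functional equals the weak residual r(v) = −F(u_h; v) evaluated at the dual solution z. -/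
open scoped intervalIntegral

lemma ftc_line_aux
    (V : Type*) [NormedAddCommGroup V] [NormedSpace ℝ V]
    (G : V → ℝ) (hG : ContDiff ℝ 1 G) (u u_h : V) :
    G u - G u_h
      = ∫ s in (0 : ℝ)..1, fderiv ℝ G (s • u + (1 - s) • u_h) (u - u_h) := by
  set γ : ℝ → V := fun s => s • u + (1 - s) • u_h with hγ
  have hγc : Continuous γ := by
    apply Continuous.add
    · exact (continuous_id.smul continuous_const)
    · exact ((continuous_const.sub continuous_id).smul continuous_const)
  have hγd : ∀ s : ℝ, HasDerivAt γ (u - u_h) s := by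
    intro s
    have h1 : HasDerivAt (fun s : ℝ => s • u) u s := by
      simpa using (hasDerivAt_id s).smul_const u
    have h2 : HasDerivAt (fun s : ℝ => (1 - s) • u_h) (-u_h) s := by
      have : HasDerivAt (fun s : ℝ => (1 - s)) (-1) s := by
        exact ((hasDerivAt_const s (1:ℝ)).sub (hasDerivAt_id' s)).congr_deriv (by simp)
      simpa using this.smul_const u_h
    have := h1.add h2
    exact this.congr_deriv (sub_eq_add_neg u u_h).symm
  have hd : ∀ s ∈ Set.uIcc (0:ℝ) 1,
      HasDerivAt (fun s => G (γ s)) (fderiv ℝ G (γ s) (u - u_h)) s := by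
    intro s _
    exact ((hG.differentiable one_ne_zero (γ s)).hasFDerivAt).comp_hasDerivAt s (hγd s)
  have hcont : Continuous fun s => fderiv ℝ G (γ s) (u - u_h) :=
    ((hG.continuous_fderiv one_ne_zero).comp hγc).clm_apply continuous_const
  have h := intervalIntegral.integral_eq_sub_of_hasDerivAt hd
    (hcont.intervalIntegrable 0 1)
  simpa [hγ] using h.symm

/-- Nonlinear error representation: let `F` be a semilinear form on `V × Vhat`
(linear in its second argument, with `w ↦ F(w; v)` continuously Fréchet
differentiable for each fixed `v`), and `M` a continuously Fréchet
differentiable goal functional.  If `u` solves the primal problem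
`F(u; v) = 0` for all `v ∈ Vhat`, and `z` solves the averaged dual problem
`∫₀¹ D₁F(s•u + (1-s)•u_h; z)(w) ds = ∫₀¹ DM(s•u + (1-s)•u_h)(w) ds`
for every `w` in a subspace `V₀` of `V` containing `u - u_h`, then
`M(u) - M(u_h) = -F(u_h; z)`. -/
theorem nonlinear_error_representation
    (V Vhat : Type*) [NormedAddCommGroup V] [NormedSpace ℝ V]
    [AddCommGroup Vhat] [Module ℝ Vhat]
    (F : V → Vhat →ₗ[ℝ] ℝ) (M : V → ℝ)
    (hF : ∀ v : Vhat, ContDiff ℝ 1 (fun w => F w v))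
    (hM : ContDiff ℝ 1 M)
    (u u_h : V) (z : Vhat) (V₀ : Submodule ℝ V)
    (hprimal : ∀ v : Vhat, F u v = 0)
    (hmem : u - u_h ∈ V₀)
    (hdual : ∀ w ∈ V₀,
      (∫ s in (0 : ℝ)..1, fderiv ℝ (fun x => F x z) (s • u + (1 - s) • u_h) w)
        = ∫ s in (0 : ℝ)..1, fderiv ℝ M (s • u + (1 - s) • u_h) w) :
    M u - M u_h = -F u_h z := by
  have hMeq := ftc_line_aux V M hM u u_h
  have hFeq := ftc_line_aux V (fun x => F x z) (hF z) u u_h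
  have := hdual (u - u_h) hmem
  rw [hMeq, ← this, ← hFeq, hprimal z]
  ring
end

section
/- Bubble-weighted L²-norm equivalence with constants independent of the simplex (Lemma 3.1): For every dimension d ≥ 1 and every degree p ∈ ℕ there exist constants c > 0 and C > 0, independent of the simplex, such that for every nondegenerate d-simplex T ⊂ ℝ^d with bubble function b_T and every polynomial function φ : ℝ^d → ℝ of total degree at most p, c · ∫_T φ(x)² dx ≤ ∫_T b_T(x) φ(x)² dx ≤ C · ∫_T φ(x)² dx, where integration is with respect to d-dimensional Lebesgue measure. -/
open scoped BigOperators
open MeasureTheory MvPolynomial Set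

set_option maxHeartbeats 1000000

namespace BW


variable {d : ℕ}

noncomputable def ev (Q : MvPolynomial (Fin d) ℝ) (y : EuclideanSpace ℝ (Fin d)) : ℝ :=
  MvPolynomial.eval (fun i => y i) Q

theorem ev_continuous (Q : MvPolynomial (Fin d) ℝ) : Continuous (ev Q) := by
  have h1 : Continuous fun y : Fin d → ℝ => MvPolynomial.eval y Q :=
    MvPolynomial.continuous_eval Q
  have h2 : Continuous fun y : EuclideanSpace ℝ (Fin d) => (fun i => y i) :=
    continuous_pi fun i => (continuous_apply i).comp (PiLp.continuous_ofLp _ _)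
  exact h1.comp h2

noncomputable def coordMap (d : ℕ) : EuclideanSpace ℝ (Fin d) →ₗ[ℝ] (Fin d → ℝ) where
  toFun := fun y i => y i
  map_add' := fun _ _ => rfl
  map_smul' := fun _ _ => rfl

theorem ev_analytic (Q : MvPolynomial (Fin d) ℝ) :
    AnalyticOnNhd ℝ (ev Q) Set.univ :=
  AnalyticOnNhd.eval_linearMap (coordMap d) Q

theorem ev_eq_zero_imp (Q : MvPolynomial (Fin d) ℝ) {U : Set (EuclideanSpace ℝ (Fin d))}
    (hU : IsOpen U) (hne : U.Nonempty) (h : ∀ y ∈ U, ev Q y = 0) : Q = 0 := by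
  obtain ⟨y₀, hy₀⟩ := hne
  have heq : Set.EqOn (ev Q) 0 Set.univ := by
    apply (ev_analytic Q).eqOn_zero_of_preconnected_of_eventuallyEq_zero
      isPreconnected_univ (Set.mem_univ y₀)
    filter_upwards [hU.mem_nhds hy₀] with y hy
    exact h y hy
  apply MvPolynomial.funext
  intro z
  have := heq (Set.mem_univ ((PiLp.continuousLinearEquiv 2 ℝ (fun _ : Fin d => ℝ)).symm z))
  simpa [ev] using this

theorem core (d p : ℕ) (v : AffineBasis (Fin (d + 1)) ℝ (EuclideanSpace ℝ (Fin d)))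
    (w : EuclideanSpace ℝ (Fin d) → ℝ) (hwc : Continuous w)
    (hw0 : ∀ y ∈ convexHull ℝ (Set.range ⇑v), 0 ≤ w y)
    (hw1 : ∀ y ∈ interior (convexHull ℝ (Set.range ⇑v)), 0 < w y) :
    ∃ c : ℝ, 0 < c ∧ ∀ Q : MvPolynomial (Fin d) ℝ, Q.totalDegree ≤ p →
      c * ∫ y in convexHull ℝ (Set.range ⇑v), ev Q y ^ 2
        ≤ ∫ y in convexHull ℝ (Set.range ⇑v), w y * ev Q y ^ 2 := by
  classical
  set S : Set (EuclideanSpace ℝ (Fin d)) := convexHull ℝ (Set.range ⇑v) with hS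
  have hSc : IsCompact S := (Set.finite_range ⇑v).isCompact_convexHull ℝ
  have hSm : MeasurableSet S := hSc.isClosed.measurableSet
  set V := MvPolynomial.restrictTotalDegree (Fin d) ℝ p with hV
  haveI : Module.Free ℝ V := Module.Free.of_divisionRing ℝ ↥V
  set n := Module.finrank ℝ V with hn
  set bV : Module.Basis (Fin n) ℝ V := Module.finBasis ℝ V with hbV
  set β : Fin n → EuclideanSpace ℝ (Fin d) → ℝ := fun k y => ev (bV k : MvPolynomial (Fin d) ℝ) y with hβ
  have hβc : ∀ k, Continuous (β k) := fun k => ev_continuous _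
  set F : (EuclideanSpace ℝ (Fin d) → ℝ) → (Fin n → ℝ) → ℝ := fun u c =>
    ∑ k, ∑ l, c k * c l * ∫ y in S, u y * (β k y * β l y) with hF
  -- expansion of `ev` of an element of `V` in terms of the basis functions
  have hevsum : ∀ (c : Fin n → ℝ) (y : EuclideanSpace ℝ (Fin d)),
      ev ((bV.equivFun.symm c : V) : MvPolynomial (Fin d) ℝ) y = ∑ k, c k * β k y := by
    intro c y
    have h1 : ((bV.equivFun.symm c : V) : MvPolynomial (Fin d) ℝ)
        = ∑ k, c k • (bV k : MvPolynomial (Fin d) ℝ) := by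
      rw [Module.Basis.equivFun_symm_apply]
      push_cast
      rfl
    rw [ev, h1, map_sum]
    refine Finset.sum_congr rfl fun k _ => ?_
    rw [MvPolynomial.smul_eval]
    rfl
  -- expansion of the quadratic form
  have hFexp : ∀ u : EuclideanSpace ℝ (Fin d) → ℝ, Continuous u → ∀ c : Fin n → ℝ,
      F u c = ∫ y in S, u y * (∑ k, c k * β k y) ^ 2 := by
    intro u hu c
    have hInt : ∀ k l : Fin n,
        IntegrableOn (fun y => c k * c l * (u y * (β k y * β l y))) S volume := by
      intro k l
      exact ((continuous_const.mul (hu.mul ((hβc k).mul (hβc l)))).continuousOn).integrableOn_compact hSc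
    have hpt : ∀ y : EuclideanSpace ℝ (Fin d), u y * (∑ k, c k * β k y) ^ 2
        = ∑ k, ∑ l, c k * c l * (u y * (β k y * β l y)) := by
      intro y
      rw [sq, Finset.sum_mul_sum, Finset.mul_sum]
      refine Finset.sum_congr rfl fun k _ => ?_
      rw [Finset.mul_sum]
      exact Finset.sum_congr rfl fun l _ => by ring
    calc F u c = ∑ k, ∑ l, ∫ y in S, c k * c l * (u y * (β k y * β l y)) := by
          refine Finset.sum_congr rfl fun k _ => Finset.sum_congr rfl fun l _ => ?_
          rw [integral_const_mul]
      _ = ∑ k, ∫ y in S, ∑ l, c k * c l * (u y * (β k y * β l y)) := by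
          refine Finset.sum_congr rfl fun k _ => ?_
          rw [integral_finset_sum _ (fun l _ => hInt k l)]
      _ = ∫ y in S, ∑ k, ∑ l, c k * c l * (u y * (β k y * β l y)) := by
          rw [integral_finset_sum _ (fun k _ => integrable_finset_sum _ (fun l _ => hInt k l))]
      _ = ∫ y in S, u y * (∑ k, c k * β k y) ^ 2 := by
          refine setIntegral_congr_fun hSm fun y _ => ?_
          rw [hpt y]
  -- homogeneity
  have hhom : ∀ (u : EuclideanSpace ℝ (Fin d) → ℝ) (t : ℝ) (c : Fin n → ℝ), F u (t • c) = t ^ 2 * F u c := by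
    intro u t c
    simp only [hF, Pi.smul_apply, smul_eq_mul, Finset.mul_sum]
    exact Finset.sum_congr rfl fun k _ => Finset.sum_congr rfl fun l _ => by ring
  -- continuity
  have hcont : ∀ u : EuclideanSpace ℝ (Fin d) → ℝ, Continuous (F u) := by
    intro u
    apply continuous_finset_sum
    intro k _
    apply continuous_finset_sum
    intro l _
    exact ((continuous_apply k).mul (continuous_apply l)).mul continuous_const
  -- positivity
  have hSint : (interior S).Nonempty := ⟨_, v.centroid_mem_interior_convexHull⟩
  have hpos : ∀ u : EuclideanSpace ℝ (Fin d) → ℝ, Continuous u → (∀ y ∈ S, 0 ≤ u y) →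
      (∀ y ∈ interior S, 0 < u y) → ∀ c : Fin n → ℝ, c ≠ 0 → 0 < F u c := by
    intro u huc hu0 hu1 c hc
    set Qv : V := bV.equivFun.symm c with hQv
    have hQvne : Qv ≠ 0 := by
      intro h
      apply hc
      have hc2 : c = bV.equivFun Qv := by
        rw [hQv, LinearEquiv.apply_symm_apply]
      rw [hc2, h, map_zero]
    have hQne : (Qv : MvPolynomial (Fin d) ℝ) ≠ 0 := by
      intro h
      exact hQvne (by exact_mod_cast Subtype.coe_injective h)
    have hz : ∃ y₀ ∈ interior S, ev (Qv : MvPolynomial (Fin d) ℝ) y₀ ≠ 0 := by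
      by_contra hcon
      push_neg at hcon
      exact hQne (ev_eq_zero_imp _ isOpen_interior hSint hcon)
    obtain ⟨y₀, hy₀, hgy₀⟩ := hz
    rw [hFexp u huc c]
    have hfun : (fun y => u y * (∑ k, c k * β k y) ^ 2)
        = fun y => u y * ev (Qv : MvPolynomial (Fin d) ℝ) y ^ 2 := by
      funext y
      rw [← hevsum c y]
    rw [hfun]
    have hgc : Continuous (ev (Qv : MvPolynomial (Fin d) ℝ)) := ev_continuous _
    rw [setIntegral_pos_iff_support_of_nonneg_ae]
    · set U := interior S ∩ {y : EuclideanSpace ℝ (Fin d) | ev (Qv : MvPolynomial (Fin d) ℝ) y ≠ 0} with hU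
      have hUopen : IsOpen U :=
        isOpen_interior.inter (isOpen_compl_singleton.preimage hgc)
      have hUne : U.Nonempty := ⟨y₀, hy₀, hgy₀⟩
      have hUsub : U ⊆
          Function.support (fun y => u y * ev (Qv : MvPolynomial (Fin d) ℝ) y ^ 2) ∩ S := by
        rintro y ⟨h1, h2⟩
        refine ⟨?_, interior_subset h1⟩
        exact mul_ne_zero (hu1 y h1).ne' (pow_ne_zero _ h2)
      exact lt_of_lt_of_le (hUopen.measure_pos volume hUne) (measure_mono hUsub)
    · refine (ae_restrict_iff' hSm).mpr (Filter.Eventually.of_forall fun y => fun hy => ?_)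
      exact mul_nonneg (hu0 y hy) (sq_nonneg _)
    · exact ((huc.mul (hgc.pow 2)).continuousOn).integrableOn_compact hSc
  -- identification of the two integrals with values of F
  have hident : ∀ (u : EuclideanSpace ℝ (Fin d) → ℝ), Continuous u → ∀ Q : MvPolynomial (Fin d) ℝ,
      ∀ hQ : Q.totalDegree ≤ p,
      ∫ y in S, u y * ev Q y ^ 2
        = F u (bV.equivFun ⟨Q, (MvPolynomial.mem_restrictTotalDegree _ p Q).mpr hQ⟩) := by
    intro u hu Q hQ
    set cQ := bV.equivFun ⟨Q, (MvPolynomial.mem_restrictTotalDegree _ p Q).mpr hQ⟩ with hcQ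
    have h1 : ((⟨Q, (MvPolynomial.mem_restrictTotalDegree _ p Q).mpr hQ⟩ : V) : MvPolynomial (Fin d) ℝ)
        = ((bV.equivFun.symm cQ : V) : MvPolynomial (Fin d) ℝ) := by
      rw [hcQ, LinearEquiv.symm_apply_apply]
    have hsum : ∀ y : EuclideanSpace ℝ (Fin d), ev Q y = ∑ k, cQ k * β k y := by
      intro y
      have : ev Q y = ev ((bV.equivFun.symm cQ : V) : MvPolynomial (Fin d) ℝ) y := by
        rw [← h1]
      rw [this, hevsum]
    rw [hFexp u hu cQ]
    refine setIntegral_congr_fun hSm fun y _ => ?_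
    rw [hsum y]
  -- main argument via compactness of the sphere
  set K := Metric.sphere (0 : Fin n → ℝ) 1 with hK
  rcases K.eq_empty_or_nonempty with hKe | hKne
  · -- the sphere is empty : every coefficient vector is zero
    have hzero : ∀ c : Fin n → ℝ, c = 0 := by
      intro c
      by_contra hc
      have hnc : ‖c‖ ≠ 0 := norm_ne_zero_iff.mpr hc
      have : (‖c‖⁻¹ • c) ∈ K := by
        rw [hK, mem_sphere_zero_iff_norm, norm_smul, norm_inv, norm_norm,
          inv_mul_cancel₀ hnc]
      rw [hKe] at this
      exact this
    refine ⟨1, one_pos, fun Q hQ => ?_⟩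
    have hQ0 : Q = 0 := by
      have h1 := hzero (bV.equivFun ⟨Q, (MvPolynomial.mem_restrictTotalDegree _ p Q).mpr hQ⟩)
      have h2 : (⟨Q, (MvPolynomial.mem_restrictTotalDegree _ p Q).mpr hQ⟩ : V) = 0 := by
        have := congrArg bV.equivFun.symm h1
        rwa [LinearEquiv.symm_apply_apply, map_zero] at this
      have h3 : Q = ((0 : V) : MvPolynomial (Fin d) ℝ) := congrArg Subtype.val h2
      simpa using h3
    subst hQ0
    simp [ev]
  · -- the sphere is nonempty
    have hKc : IsCompact K := isCompact_sphere 0 1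
    obtain ⟨a, haK, ha⟩ := hKc.exists_isMinOn hKne (hcont w).continuousOn
    obtain ⟨b, hbK, hb⟩ := hKc.exists_isMaxOn hKne ((hcont fun _ => (1 : ℝ))).continuousOn
    have hane : a ≠ 0 := by
      intro h
      rw [hK, mem_sphere_zero_iff_norm, h, norm_zero] at haK
      exact zero_ne_one haK
    have hm : 0 < F w a := hpos w hwc hw0 hw1 a hane
    have hM : 0 < F (fun _ => (1 : ℝ)) b := by
      obtain ⟨u₀, hu₀⟩ := hKne
      have hu₀ne : u₀ ≠ 0 := by
        intro h
        rw [hK, mem_sphere_zero_iff_norm, h, norm_zero] at hu₀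
        exact zero_ne_one hu₀
      exact lt_of_lt_of_le
        (hpos (fun _ => (1 : ℝ)) continuous_const (fun _ _ => zero_le_one)
          (fun _ _ => zero_lt_one) u₀ hu₀ne) (hb hu₀)
    refine ⟨F w a / F (fun _ => (1 : ℝ)) b, div_pos hm hM, fun Q hQ => ?_⟩
    set cQ := bV.equivFun ⟨Q, (MvPolynomial.mem_restrictTotalDegree _ p Q).mpr hQ⟩ with hcQ
    have e1 : ∫ y in S, ev Q y ^ 2 = F (fun _ => (1 : ℝ)) cQ := by
      have := hident (fun _ => (1 : ℝ)) continuous_const Q hQ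
      simpa only [one_mul] using this
    have e2 : ∫ y in S, w y * ev Q y ^ 2 = F w cQ := hident w hwc Q hQ
    rw [e1, e2]
    rcases eq_or_ne cQ 0 with h0 | h0
    · rw [h0]
      have hz1 : F (fun _ => (1 : ℝ)) (0 : Fin n → ℝ) = 0 := by
        simp [hF]
      have hz2 : F w (0 : Fin n → ℝ) = 0 := by
        simp [hF]
      rw [hz1, hz2, mul_zero]
    · have hnorm : ‖cQ‖ ≠ 0 := norm_ne_zero_iff.mpr h0
      set t := ‖cQ‖ with ht
      have hu : (t⁻¹ • cQ) ∈ K := by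
        rw [hK, mem_sphere_zero_iff_norm, norm_smul, norm_inv, norm_norm,
          inv_mul_cancel₀ hnorm]
      have hres : ∀ u : EuclideanSpace ℝ (Fin d) → ℝ, F u cQ = t ^ 2 * F u (t⁻¹ • cQ) := by
        intro u
        rw [← hhom u t (t⁻¹ • cQ), smul_smul, mul_inv_cancel₀ hnorm, one_smul]
      rw [hres w, hres (fun _ => (1 : ℝ))]
      have hA : F w a ≤ F w (t⁻¹ • cQ) := ha hu
      have hB : F (fun _ => (1 : ℝ)) (t⁻¹ • cQ) ≤ F (fun _ => (1 : ℝ)) b := hb hu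
      have ht2 : (0 : ℝ) ≤ t ^ 2 := sq_nonneg t
      calc F w a / F (fun _ => (1 : ℝ)) b * (t ^ 2 * F (fun _ => (1 : ℝ)) (t⁻¹ • cQ))
          ≤ F w a / F (fun _ => (1 : ℝ)) b * (t ^ 2 * F (fun _ => (1 : ℝ)) b) := by
            apply mul_le_mul_of_nonneg_left (mul_le_mul_of_nonneg_left hB ht2)
              (le_of_lt (div_pos hm hM))
        _ = t ^ 2 * F w a := by
            field_simp
        _ ≤ t ^ 2 * F w (t⁻¹ • cQ) := mul_le_mul_of_nonneg_left hA ht2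



theorem affineMap_ext {ι E F : Type*} [Fintype ι] [AddCommGroup E] [Module ℝ E]
    [AddCommGroup F] [Module ℝ F] (b : AffineBasis ι ℝ E) (f g : E →ᵃ[ℝ] F)
    (h : ∀ i, f (b i) = g (b i)) (y : E) : f y = g y := by
  have hw := b.sum_coord_apply_eq_one y
  rw [← b.affineCombination_coord_eq_self y,
    Finset.map_affineCombination _ _ _ hw f, Finset.map_affineCombination _ _ _ hw g]
  have : ⇑f ∘ ⇑b = ⇑g ∘ ⇑b := funext fun i => h i
  rw [this]

theorem totalDegree_aeval_le {σ τ : Type*} (L : σ → MvPolynomial τ ℝ)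
    (hL : ∀ i, (L i).totalDegree ≤ 1) (P : MvPolynomial σ ℝ) :
    (MvPolynomial.aeval L P).totalDegree ≤ P.totalDegree := by
  rw [MvPolynomial.aeval_def, MvPolynomial.eval₂_eq]
  apply MvPolynomial.totalDegree_finsetSum_le
  intro m hm
  have h1 : (∏ i ∈ m.support, L i ^ m i).totalDegree ≤ m.sum fun _ e => e := by
    refine le_trans (MvPolynomial.totalDegree_finset_prod _ _) ?_
    rw [Finsupp.sum]
    apply Finset.sum_le_sum
    intro i _
    refine le_trans (MvPolynomial.totalDegree_pow _ _) ?_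
    calc m i * (L i).totalDegree ≤ m i * 1 := Nat.mul_le_mul_left _ (hL i)
      _ = m i := Nat.mul_one _
  calc (algebraMap ℝ (MvPolynomial τ ℝ) (MvPolynomial.coeff m P) *
          ∏ i ∈ m.support, L i ^ m i).totalDegree
      ≤ (algebraMap ℝ (MvPolynomial τ ℝ) (MvPolynomial.coeff m P)).totalDegree +
          (∏ i ∈ m.support, L i ^ m i).totalDegree := MvPolynomial.totalDegree_mul _ _
    _ ≤ m.sum fun _ e => e := by
        rw [MvPolynomial.algebraMap_eq, MvPolynomial.totalDegree_C, zero_add]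
        exact h1
    _ ≤ P.totalDegree := MvPolynomial.le_totalDegree hm

theorem eval_aeval {σ τ : Type*} (L : σ → MvPolynomial τ ℝ) (P : MvPolynomial σ ℝ)
    (z : τ → ℝ) :
    MvPolynomial.eval z (MvPolynomial.aeval L P) =
      MvPolynomial.eval (fun i => MvPolynomial.eval z (L i)) P := by
  rw [MvPolynomial.aeval_def, MvPolynomial.algebraMap_eq,
    MvPolynomial.eval₂_comp_left (MvPolynomial.eval z) MvPolynomial.C L P]
  have : (MvPolynomial.eval z).comp MvPolynomial.C = RingHom.id ℝ := by
    ext r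
    simp
  rw [this, MvPolynomial.eval₂_id]
  rfl

end BW


open BW in
/-- Bubble-weighted `L²`-norm equivalence with constants independent of the
simplex (Lemma 3.1): for every dimension `d ≥ 1` and degree `p` there exist
constants `c, C > 0`, independent of the simplex, such that for every
nondegenerate `d`-simplex `T ⊂ ℝ^d` with bubble function `b_T` and every
polynomial function `φ` of total degree at most `p`,
`c ∫_T φ² dx ≤ ∫_T b_T φ² dx ≤ C ∫_T φ² dx`. -/
theorem bubble_weighted_norm_equivalence
    (d : ℕ) (hd : 1 ≤ d) (p : ℕ) :
    ∃ c C : ℝ, 0 < c ∧ 0 < C ∧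
      ∀ (x : Fin (d + 1) → EuclideanSpace ℝ (Fin d)),
        AffineIndependent ℝ x →
        ∀ (lam : Fin (d + 1) → (EuclideanSpace ℝ (Fin d) →ᵃ[ℝ] ℝ)),
          (∀ i j, lam i (x j) = if i = j then 1 else 0) →
          ∀ (P : MvPolynomial (Fin d) ℝ), P.totalDegree ≤ p →
            c * (∫ y in convexHull ℝ (Set.range x),
                  (MvPolynomial.eval (fun i => y i) P) ^ 2)
              ≤ (∫ y in convexHull ℝ (Set.range x),
                  (∏ i, lam i y) * (MvPolynomial.eval (fun i => y i) P) ^ 2) ∧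
            (∫ y in convexHull ℝ (Set.range x),
                (∏ i, lam i y) * (MvPolynomial.eval (fun i => y i) P) ^ 2)
              ≤ C * (∫ y in convexHull ℝ (Set.range x),
                  (MvPolynomial.eval (fun i => y i) P) ^ 2) := by
  classical
  -- a fixed reference affine basis
  obtain ⟨vB⟩ : Nonempty (AffineBasis (Fin (d + 1)) ℝ (EuclideanSpace ℝ (Fin d))) :=
    AffineBasis.exists_affineBasis_of_finiteDimensional
      (by simp [finrank_euclideanSpace_fin])
  set S : Set (EuclideanSpace ℝ (Fin d)) := convexHull ℝ (Set.range ⇑vB) with hSdef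
  have hSc : IsCompact S := (Set.finite_range ⇑vB).isCompact_convexHull ℝ
  have hSm : MeasurableSet S := hSc.isClosed.measurableSet
  -- the reference bubble function
  set w : EuclideanSpace ℝ (Fin d) → ℝ := fun y => ∏ i, vB.coord i y with hwdef
  have hwc : Continuous w :=
    continuous_finset_prod _ fun i _ => (vB.coord i).continuous_of_finiteDimensional
  have hw0 : ∀ y ∈ S, 0 ≤ w y := by
    intro y hy
    rw [hSdef, vB.convexHull_eq_nonneg_coord] at hy
    exact Finset.prod_nonneg fun i _ => hy i
  have hw1 : ∀ y ∈ interior S, 0 < w y := by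
    intro y hy
    rw [hSdef, vB.interior_convexHull] at hy
    exact Finset.prod_pos fun i _ => hy i
  obtain ⟨c, hc, hcore⟩ := core d p vB w hwc hw0 hw1
  refine ⟨c, 1, hc, one_pos, ?_⟩
  intro x hx lam hlam P hP
  -- the affine basis given by the simplex vertices
  have hxtop : affineSpan ℝ (Set.range x) = ⊤ :=
    hx.affineSpan_eq_top_iff_card_eq_finrank_add_one.mpr
      (by simp [finrank_euclideanSpace_fin])
  set xB : AffineBasis (Fin (d + 1)) ℝ (EuclideanSpace ℝ (Fin d)) := ⟨x, hx, hxtop⟩ with hxBdef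
  have hxB : ⇑xB = x := rfl
  set T : Set (EuclideanSpace ℝ (Fin d)) := convexHull ℝ (Set.range x) with hTdef
  have hTc : IsCompact T := (Set.finite_range x).isCompact_convexHull ℝ
  have hTm : MeasurableSet T := hTc.isClosed.measurableSet
  -- lam agrees with barycentric coordinates of xB
  have hlamcoord : ∀ i (y : EuclideanSpace ℝ (Fin d)), lam i y = xB.coord i y := by
    intro i y
    refine affineMap_ext xB (lam i) (xB.coord i) (fun j => ?_) y
    rw [xB.coord_apply]
    exact hlam i j
  -- upper bound facts
  have hlam0 : ∀ y ∈ T, (0 : ℝ) ≤ ∏ i, lam i y := by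
    intro y hy
    have hy' : y ∈ convexHull ℝ (Set.range ⇑xB) := by rwa [hxB]
    rw [xB.convexHull_eq_nonneg_coord] at hy'
    exact Finset.prod_nonneg fun i _ => (hlamcoord i y) ▸ hy' i
  have hlam1 : ∀ y ∈ T, (∏ i, lam i y) ≤ 1 := by
    intro y hy
    have hy' : y ∈ convexHull ℝ (Set.range ⇑xB) := by rwa [hxB]
    rw [xB.convexHull_eq_nonneg_coord] at hy'
    apply Finset.prod_le_one
    · intro i _
      exact (hlamcoord i y) ▸ hy' i
    · intro i _
      rw [hlamcoord i y]
      have hsum := xB.sum_coord_apply_eq_one y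
      calc xB.coord i y ≤ ∑ j, xB.coord j y :=
            Finset.single_le_sum (fun j _ => hy' j) (Finset.mem_univ i)
        _ = 1 := hsum
  have int1 : IntegrableOn (fun y => ev P y ^ 2) T volume :=
    (((ev_continuous P).pow 2).continuousOn).integrableOn_compact hTc
  have hlamC : Continuous fun y => ∏ i, lam i y :=
    continuous_finset_prod _ fun i _ => (lam i).continuous_of_finiteDimensional
  have int2 : IntegrableOn (fun y => (∏ i, lam i y) * ev P y ^ 2) T volume :=
    ((hlamC.mul ((ev_continuous P).pow 2)).continuousOn).integrableOn_compact hTc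
  constructor
  · -- LOWER BOUND
    -- construction of the affine change of variables
    set bRef := vB.basisOf 0 with hbRef
    set bX := xB.basisOf 0 with hbX
    set LE := bRef.equiv bX (Equiv.refl _) with hLE
    have hdet : LinearMap.det (LE.toLinearMap) ≠ 0 := LE.isUnit_det'.ne_zero
    set m0 : EuclideanSpace ℝ (Fin d) := x 0 - LE (vB 0) with hm0
    set A : EuclideanSpace ℝ (Fin d) → EuclideanSpace ℝ (Fin d) := fun y => m0 + LE y with hA
    have hAv : ∀ j, A (vB j) = x j := by
      intro j
      rcases eq_or_ne j 0 with rfl | hj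
      · show x 0 - LE (vB 0) + LE (vB 0) = x 0
        abel
      · have h2 : bRef ⟨j, hj⟩ = vB j - vB 0 := by
          rw [hbRef, AffineBasis.basisOf_apply]
          rfl
        have h3 : bX ⟨j, hj⟩ = x j - x 0 := by
          rw [hbX, AffineBasis.basisOf_apply]
          rfl
        have h1 : LE (vB j - vB 0) = x j - x 0 := by
          rw [← h2, ← h3, hLE]
          exact bRef.equiv_apply ⟨j, hj⟩ bX (Equiv.refl _)
        have h4 : LE (vB j) - LE (vB 0) = x j - x 0 := by
          rw [← map_sub]
          exact h1
        show x 0 - LE (vB 0) + LE (vB j) = x j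
        have h5 : x 0 - LE (vB 0) + LE (vB j) = x 0 + (LE (vB j) - LE (vB 0)) := by abel
        rw [h5, h4]
        abel
    -- bundled affine map
    set Am : EuclideanSpace ℝ (Fin d) →ᵃ[ℝ] EuclideanSpace ℝ (Fin d) :=
      { toFun := A
        linear := LE.toLinearMap
        map_vadd' := by
          intro pp vv
          show A (vv + pp) = LE vv + A pp
          rw [hA]
          simp only [map_add]
          abel } with hAm
    have hAmc : ⇑Am = A := rfl
    have himg : A '' S = T := by
      have hcomp : ⇑Am ∘ ⇑vB = x := funext fun j => hAv j
      rw [← hAmc, hSdef, AffineMap.image_convexHull, ← Set.range_comp, hcomp, hTdef]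
    -- change of variables
    set Lc := LinearMap.toContinuousLinearMap LE.toLinearMap with hLcdef
    have hLc : ⇑Lc = ⇑LE.toLinearMap := LinearMap.coe_toContinuousLinearMap' LE.toLinearMap
    have hAeq : A = fun y => m0 + Lc y := by
      funext y
      rw [hLc]
      rfl
    have hAder : ∀ y ∈ S, HasFDerivWithinAt A Lc S y := by
      intro y _
      rw [hAeq]
      exact ((Lc.hasFDerivAt).const_add m0).hasFDerivWithinAt
    have hAinj : Set.InjOn A S := by
      intro a _ b _ h
      rw [hA] at h
      exact LE.injective (by simpa using h)
    have hCOV : ∀ g : EuclideanSpace ℝ (Fin d) → ℝ,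
        ∫ y in T, g y = |LinearMap.det LE.toLinearMap| * ∫ y in S, g (A y) := by
      intro g
      rw [← himg, integral_image_eq_integral_abs_det_fderiv_smul volume hSm hAder hAinj g]
      rw [hLcdef]
      simp only [LinearMap.det_toContinuousLinearMap, smul_eq_mul]
      rw [integral_const_mul]
    -- the substituted polynomial
    set Lpoly : Fin d → MvPolynomial (Fin d) ℝ := fun i =>
      MvPolynomial.C (m0 i) + ∑ j, MvPolynomial.C ((LE (EuclideanSpace.single j 1)) i)
        * MvPolynomial.X j with hLpoly
    have hLdeg : ∀ i, (Lpoly i).totalDegree ≤ 1 := by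
      intro i
      refine le_trans (MvPolynomial.totalDegree_add _ _) ?_
      apply max_le
      · rw [MvPolynomial.totalDegree_C]
        exact Nat.zero_le 1
      · apply MvPolynomial.totalDegree_finsetSum_le
        intro j _
        refine le_trans (MvPolynomial.totalDegree_mul _ _) ?_
        rw [MvPolynomial.totalDegree_C, MvPolynomial.totalDegree_X]
    have hLeval : ∀ (y : EuclideanSpace ℝ (Fin d)) (i : Fin d),
        MvPolynomial.eval (fun k => y k) (Lpoly i) = (A y) i := by
      intro y i
      have h7 : (A y) i = m0 i + (LE y) i := rfl
      have h8 : (LE y) i = ∑ j, y j * (LE (EuclideanSpace.single j 1)) i := by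
        conv_lhs => rw [show y = ∑ j, y j • (EuclideanSpace.single j 1 :
          EuclideanSpace ℝ (Fin d)) from by
            ext i'
            rw [WithLp.ofLp_sum, Finset.sum_apply]
            simp [EuclideanSpace.single_apply, mul_comm]]
        rw [map_sum, WithLp.ofLp_sum, Finset.sum_apply]
        refine Finset.sum_congr rfl fun j _ => ?_
        rw [_root_.map_smul]
        rfl
      rw [h7, h8, hLpoly]
      simp only [map_add, MvPolynomial.eval_C, map_sum, MvPolynomial.eval_mul,
        MvPolynomial.eval_X]
      refine congrArg (fun t => m0 i + t) ?_
      exact Finset.sum_congr rfl fun j _ => by ring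
    set Q : MvPolynomial (Fin d) ℝ := MvPolynomial.aeval Lpoly P with hQdef
    have hQdeg : Q.totalDegree ≤ p :=
      le_trans (totalDegree_aeval_le Lpoly hLdeg P) hP
    have hQev : ∀ y, ev P (A y) = ev Q y := by
      intro y
      simp only [ev, hQdef]
      rw [BW.eval_aeval]
      have harg : (fun i => (A y) i)
          = fun i => MvPolynomial.eval (fun k => y k) (Lpoly i) :=
        funext fun i => (hLeval y i).symm
      rw [harg]
    -- coordinates under the change of variables
    have hlamA : ∀ i y, lam i (A y) = vB.coord i y := by
      intro i y
      have h9 := affineMap_ext vB ((lam i).comp Am) (vB.coord i) (fun j => by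
        rw [AffineMap.comp_apply]
        have h10 : Am (vB j) = x j := hAv j
        rw [h10, hlam i j, vB.coord_apply]) y
      rw [AffineMap.comp_apply] at h9
      exact h9
    -- rewrite both integrals via the change of variables
    have hint1 : (fun y => (∏ i, lam i (A y)) * ev P (A y) ^ 2)
        = fun y => w y * ev Q y ^ 2 := by
      funext y
      rw [hQev y]
      congr 1
      exact Finset.prod_congr rfl fun i _ => hlamA i y
    have e1 : ∫ y in T, (∏ i, lam i y) * ev P y ^ 2
        = |LinearMap.det LE.toLinearMap| * ∫ y in S, w y * ev Q y ^ 2 := by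
      rw [hCOV (fun z => (∏ i, lam i z) * ev P z ^ 2)]
      congr 1
      rw [show (fun y => (∏ i, lam i (A y)) * ev P (A y) ^ 2)
        = fun y => w y * ev Q y ^ 2 from hint1]
    have e2 : ∫ y in T, ev P y ^ 2
        = |LinearMap.det LE.toLinearMap| * ∫ y in S, ev Q y ^ 2 := by
      rw [hCOV (fun z => ev P z ^ 2)]
      congr 1
      rw [show (fun y => ev P (A y) ^ 2) = fun y => ev Q y ^ 2 from
        funext fun y => by rw [hQev y]]
    have key := hcore Q hQdeg
    show c * ∫ y in T, ev P y ^ 2 ≤ ∫ y in T, (∏ i, lam i y) * ev P y ^ 2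
    rw [e1, e2]
    have habs : (0 : ℝ) ≤ |LinearMap.det LE.toLinearMap| := abs_nonneg _
    calc c * (|LinearMap.det LE.toLinearMap| * ∫ y in S, ev Q y ^ 2)
        = |LinearMap.det LE.toLinearMap| * (c * ∫ y in S, ev Q y ^ 2) := by ring
      _ ≤ |LinearMap.det LE.toLinearMap| * ∫ y in S, w y * ev Q y ^ 2 :=
          mul_le_mul_of_nonneg_left key habs
  · -- UPPER BOUND
    have hmono : ∫ y in T, (∏ i, lam i y) * ev P y ^ 2 ≤ ∫ y in T, ev P y ^ 2 := by
      refine setIntegral_mono_on int2 int1 hTm fun y hy => ?_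
      exact mul_le_of_le_one_left (sq_nonneg _) (hlam1 y hy)
    calc (∫ y in T, (∏ i, lam i y) * ev P y ^ 2) ≤ ∫ y in T, ev P y ^ 2 := hmono
      _ = 1 * ∫ y in T, ev P y ^ 2 := (one_mul _).symm
end

section
/- Cell residual part of the solvability theorem (Theorem on unique determination of the cell residual): Let d ≥ 1, let T ⊂ ℝ^d be a nondegenerate d-simplex with bubble function b_T, let σ denote the (d−1)-dimensional Hausdorff measure restricted to the topological boundary ∂T, and let p ∈ ℕ. Let R be a polynomial function of total degree at most p, and let ρ : ℝ^d → ℝ be σ-integrable on ∂T. If R' is a polynomial function of total degree at most p satisfying the local cell problem ∫_T R'(x) b_T(x) φ(x) dx = ∫_T R(x) b_T(x) φ(x) dx + ∫_{∂T} ρ b_T φ dσ for every polynomial function φ of total degree at most p, then R' = R identically. (In particular, since b_T vanishes on ∂T, the boundary term is zero, and the cell residual R in any local decomposition r_T(v) = ⟨R, v⟩_T + ⟨ρ, v⟩_{∂T} is uniquely determined by testing against b_T φ.) -/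
open scoped BigOperators
open MeasureTheory

/-- Cell residual part of the solvability theorem: let `T ⊂ ℝ^d` (`d ≥ 1`) be a
nondegenerate `d`-simplex with bubble function `b_T`, let `σ` be the
`(d-1)`-dimensional Hausdorff measure restricted to `∂T`, and let `p ∈ ℕ`.
If `R` is a polynomial function of total degree at most `p`, `ρ` is
`σ`-integrable on `∂T`, and `R'` is a polynomial function of total degree at
most `p` satisfying the local cell problem
`∫_T R' b_T φ dx = ∫_T R b_T φ dx + ∫_{∂T} ρ b_T φ dσ` for every polynomial
function `φ` of total degree at most `p`, then `R' = R` identically. -/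
theorem cell_residual_uniquely_determined
    (d : ℕ) (hd : 1 ≤ d) (p : ℕ)
    (x : Fin (d + 1) → EuclideanSpace ℝ (Fin d))
    (hx : AffineIndependent ℝ x)
    (lam : Fin (d + 1) → (EuclideanSpace ℝ (Fin d) →ᵃ[ℝ] ℝ))
    (hlam : ∀ i j, lam i (x j) = if i = j then 1 else 0)
    (T : Set (EuclideanSpace ℝ (Fin d))) (hT : T = convexHull ℝ (Set.range x))
    (bT : EuclideanSpace ℝ (Fin d) → ℝ) (hbT : bT = fun y => ∏ i, lam i y)
    (P : MvPolynomial (Fin d) ℝ) (hPdeg : P.totalDegree ≤ p)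
    (R : EuclideanSpace ℝ (Fin d) → ℝ)
    (hR : R = fun y => MvPolynomial.eval (fun i => y i) P)
    (ρ : EuclideanSpace ℝ (Fin d) → ℝ)
    (hρ : IntegrableOn ρ (frontier T) (μH[(d : ℝ) - 1]))
    (P' : MvPolynomial (Fin d) ℝ) (hP'deg : P'.totalDegree ≤ p)
    (R' : EuclideanSpace ℝ (Fin d) → ℝ)
    (hR' : R' = fun y => MvPolynomial.eval (fun i => y i) P')
    (hlocal : ∀ Q : MvPolynomial (Fin d) ℝ, Q.totalDegree ≤ p →
      (∫ y in T, R' y * bT y * MvPolynomial.eval (fun i => y i) Q)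
        = (∫ y in T, R y * bT y * MvPolynomial.eval (fun i => y i) Q)
          + ∫ y in frontier T,
              ρ y * bT y * MvPolynomial.eval (fun i => y i) Q ∂μH[(d : ℝ) - 1]) :
    ∀ y, R' y = R y := by
  classical
  set Q : MvPolynomial (Fin d) ℝ := P' - P with hQdef
  set f : EuclideanSpace ℝ (Fin d) → ℝ :=
    fun y => MvPolynomial.eval (fun i => y i) Q with hfdef
  have hfval : ∀ y, f y = R' y - R y := by
    intro y
    simp [hfdef, hQdef, hR, hR', map_sub]
  have hQdeg : Q.totalDegree ≤ p := by
    have h1 : Q.totalDegree ≤ max P'.totalDegree (-P).totalDegree := by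
      simpa [hQdef, sub_eq_add_neg] using MvPolynomial.totalDegree_add P' (-P)
    have h2 : (-P).totalDegree = P.totalDegree := MvPolynomial.totalDegree_neg P
    exact h1.trans (by rw [h2]; exact max_le hP'deg hPdeg)
  -- continuity facts
  have hcontlam : ∀ i, Continuous (lam i) :=
    fun i => (lam i).continuous_of_finiteDimensional
  have hcontb : Continuous bT := by
    rw [hbT]; exact continuous_finset_prod _ fun i _ => hcontlam i
  have hcontcoord : Continuous fun y : EuclideanSpace ℝ (Fin d) => (fun i => y i) := by
    exact continuous_pi fun i => (continuous_apply i).comp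
      (PiLp.continuous_ofLp 2 fun _ : Fin d => ℝ)
  have hcontevalQ : ∀ W : MvPolynomial (Fin d) ℝ,
      Continuous fun y : EuclideanSpace ℝ (Fin d) => MvPolynomial.eval (fun i => y i) W := by
    intro W
    exact (MvPolynomial.continuous_eval W).comp hcontcoord
  have hcontf : Continuous f := hcontevalQ Q
  have hcontR : Continuous R := by rw [hR]; exact hcontevalQ P
  have hcontR' : Continuous R' := by rw [hR']; exact hcontevalQ P'
  -- nonnegativity of barycentric coordinates on T
  have hlamnn : ∀ i, ∀ y ∈ T, 0 ≤ lam i y := by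
    intro i y hy
    rw [hT] at hy
    have hsub : convexHull ℝ (Set.range x) ⊆ (lam i) ⁻¹' Set.Ici 0 := by
      apply convexHull_min
      · rintro _ ⟨j, rfl⟩
        simp only [Set.mem_preimage, Set.mem_Ici, hlam i j]
        split_ifs <;> norm_num
      · exact (convex_Ici (0 : ℝ)).affine_preimage (lam i)
    exact hsub hy
  -- the affine span of the x's is everything
  have hspan : affineSpan ℝ (Set.range x) = ⊤ := by
    rw [hx.affineSpan_eq_top_iff_card_eq_finrank_add_one]
    simp [finrank_euclideanSpace_fin]
  -- barycentric coordinates of affine combinations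
  have hlam_comb : ∀ (w : Fin (d + 1) → ℝ), (∑ i, w i) = 1 → ∀ j,
      lam j (Finset.univ.affineCombination ℝ x w) = w j := by
    intro w hw j
    rw [Finset.map_affineCombination _ x w hw (lam j),
      Finset.univ.affineCombination_eq_linear_combination _ _ hw]
    simp [Function.comp, hlam, mul_ite]
  -- points with all barycentric coordinates positive lie in T
  have hposT : ∀ z : EuclideanSpace ℝ (Fin d), (∀ i, 0 < lam i z) → z ∈ T := by
    intro z hz
    have hz' : z ∈ affineSpan ℝ (Set.range x) := by
      rw [hspan]; exact AffineSubspace.mem_top ℝ _ z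
    obtain ⟨w, hw1, hwz⟩ := eq_affineCombination_of_mem_affineSpan_of_fintype hz'
    have hwpos : ∀ j, 0 < w j := by
      intro j
      have := hz j
      rwa [hwz, hlam_comb w hw1 j] at this
    rw [hT, hwz]
    exact affineCombination_mem_convexHull (fun i _ => (hwpos i).le) hw1
  -- the set of points with positive barycentric coordinates is open and nonempty
  set U : Set (EuclideanSpace ℝ (Fin d)) := {z | ∀ i, 0 < lam i z} with hUdef
  have hUopen : IsOpen U := by
    have : U = ⋂ i, (lam i) ⁻¹' Set.Ioi 0 := by ext z; simp [hUdef]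
    rw [this]
    exact isOpen_iInter_of_finite fun i => isOpen_Ioi.preimage (hcontlam i)
  have hUsub : U ⊆ T := fun z hz => hposT z hz
  obtain ⟨c, hcU⟩ : U.Nonempty := by
    refine ⟨Finset.univ.affineCombination ℝ x (fun _ => ((d : ℝ) + 1)⁻¹), ?_⟩
    intro i
    have hsum : (∑ _i : Fin (d + 1), ((d : ℝ) + 1)⁻¹) = 1 := by
      rw [Finset.sum_const]
      simp [Finset.card_univ]
      field_simp
    rw [hlam_comb _ hsum i]
    positivity
  -- T is compact, hence closed and measurable
  have hTcompact : IsCompact T := by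
    rw [hT]; exact (Set.finite_range x).isCompact_convexHull ℝ
  have hTclosed : IsClosed T := hTcompact.isClosed
  have hTmeas : MeasurableSet T := hTclosed.measurableSet
  -- the bubble function vanishes on the frontier of T
  have hfront : ∀ y ∈ frontier T, bT y = 0 := by
    intro y hy
    have hyT : y ∈ T := by
      have h1 : y ∈ closure T := hy.1
      rwa [hTclosed.closure_eq] at h1
    by_contra hb
    have hbne : ∀ i, lam i y ≠ 0 := by
      rw [hbT] at hb
      intro i hi
      exact hb (Finset.prod_eq_zero (Finset.mem_univ i) hi)
    have hypos : y ∈ U := fun i => lt_of_le_of_ne (hlamnn i y hyT) (Ne.symm (hbne i))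
    have : y ∈ interior T := interior_maximal hUsub hUopen hypos
    exact hy.2 this
  -- the boundary integral vanishes
  have hbzero : (∫ y in frontier T,
      ρ y * bT y * MvPolynomial.eval (fun i => y i) Q ∂μH[(d : ℝ) - 1]) = 0 := by
    rw [setIntegral_congr_fun (isClosed_frontier.measurableSet)
      (g := fun _ => (0 : ℝ)) (fun y hy => by simp [hfront y hy])]
    simp
  -- integrability of the relevant functions on T
  have hint : ∀ g : EuclideanSpace ℝ (Fin d) → ℝ, Continuous g →
      IntegrableOn g T volume :=
    fun g hg => hg.continuousOn.integrableOn_compact hTcompact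
  -- the key vanishing integral
  have hkey : (∫ y in T, f y ^ 2 * bT y) = 0 := by
    have h1 := hlocal Q hQdeg
    rw [hbzero, add_zero] at h1
    have h2 : (∫ y in T, (R' y * bT y * f y - R y * bT y * f y)) = 0 := by
      rw [integral_sub (hint (fun y => R' y * bT y * f y) ((hcontR'.mul hcontb).mul hcontf)) (hint (fun y => R y * bT y * f y) ((hcontR.mul hcontb).mul hcontf))]
      simpa [hfdef] using sub_eq_zero_of_eq h1
    rw [← h2]
    apply setIntegral_congr_fun hTmeas
    intro y _
    show f y ^ 2 * bT y = R' y * bT y * f y - R y * bT y * f y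
    rw [hfval y]
    ring
  -- f vanishes on U
  have hf0U : ∀ z ∈ U, f z = 0 := by
    intro z hz
    by_contra hfz
    set g : EuclideanSpace ℝ (Fin d) → ℝ := fun y => f y ^ 2 * bT y with hgdef
    have hcontg : Continuous g := by
      exact (hcontf.pow 2).mul hcontb
    have hgnn : 0 ≤ᵐ[volume.restrict T] g := by
      refine (ae_restrict_iff' hTmeas).2 (Filter.Eventually.of_forall fun y hy => ?_)
      have hbnn : 0 ≤ bT y := by
        rw [hbT]
        exact Finset.prod_nonneg fun i _ => hlamnn i y hy
      positivity
    have hae : g =ᵐ[volume.restrict T] 0 :=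
      (integral_eq_zero_iff_of_nonneg_ae hgnn (hint g hcontg)).1 hkey
    have hmeas0 : volume ({y | g y ≠ 0} ∩ T) = 0 := by
      have := ae_iff.1 hae
      rwa [Measure.restrict_apply (by
        exact (isOpen_ne_fun hcontg continuous_const).measurableSet)] at this
    -- g is positive at z
    have hgz : 0 < g z := by
      have hbz : 0 < bT z := by
        rw [hbT]
        exact Finset.prod_pos fun i _ => hz i
      have : f z ^ 2 > 0 := by positivity
      exact mul_pos this hbz
    -- find a ball around z inside U on which g ≠ 0
    have hopen2 : IsOpen (U ∩ g ⁻¹' Set.Ioi 0) :=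
      hUopen.inter (isOpen_Ioi.preimage hcontg)
    have hz2 : z ∈ U ∩ g ⁻¹' Set.Ioi 0 := ⟨hz, hgz⟩
    obtain ⟨r, hr, hball⟩ := Metric.isOpen_iff.1 hopen2 z hz2
    have hsub2 : Metric.ball z r ⊆ {y | g y ≠ 0} ∩ T := by
      intro y hy
      obtain ⟨hyU, hygt⟩ := hball hy
      exact ⟨ne_of_gt hygt, hUsub hyU⟩
    have : volume (Metric.ball z r) = 0 :=
      le_antisymm (hmeas0 ▸ measure_mono hsub2) zero_le
    exact (Metric.measure_ball_pos volume z hr).ne' this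
  -- f is analytic, so it vanishes everywhere
  have hfanal : AnalyticOnNhd ℝ f Set.univ := by
    have := AnalyticOnNhd.eval_linearMap (𝕜 := ℝ)
      ((WithLp.linearEquiv 2 ℝ (Fin d → ℝ)).toLinearMap) Q
    exact this
  have hf0 : ∀ y, f y = 0 := by
    have hev : f =ᶠ[nhds c] 0 :=
      Filter.eventuallyEq_of_mem (hUopen.mem_nhds hcU) hf0U
    have := hfanal.eqOn_zero_of_preconnected_of_eventuallyEq_zero
      isPreconnected_univ (Set.mem_univ c) hev
    intro y
    exact this (Set.mem_univ y)
  intro y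
  have := hf0 y
  rw [hfval y] at this
  linarith
end

section
/- Facet residual part of the solvability theorem (Theorem on unique determination of the facet residuals): Let d ≥ 2, let T ⊂ ℝ^d be a nondegenerate d-simplex with vertices x_0, …, x_d, facets S_j = convexHull{x_i : i ≠ j} carrying (d−1)-dimensional Hausdorff measures σ_j, and cone functions β_k = ∏_{i≠k} λ_i. Let p, q ∈ ℕ, let R be a polynomial function of total degree at most p, and for each j let ρ_j be (the restriction to S_j of) a polynomial function of total degree at most q. Define the local residual r_T(v) = ∫_T R v dx + Σ_{j=0}^d ∫_{S_j} ρ_j v dσ_j for continuous v. Then for each k: (i) ρ_k satisfies the local facet problem ∫_{S_k} ρ_k β_k φ dσ_k = r_T(β_k φ) − ∫_T R β_k φ dx for every polynomial function φ of total degree at most q; and (ii) if ρ' is any polynomial function of total degree at most q satisfying the same equations, then ρ' = ρ_k on S_k. -/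
open MeasureTheory Metric Set Module
open scoped ENNReal NNReal

lemma aux_hm_pos (n : ℕ) (hn : 1 ≤ n) {ε : ℝ} (hε : 0 < ε) :
    0 < μH[(n:ℝ)] (Metric.ball (0 : EuclideanSpace ℝ (Fin n)) ε) := by
  have hK := PiLp.antilipschitzWith_ofLp 2 (fun _ : Fin n => ℝ)
  set K : ℝ≥0 := ((Fintype.card (Fin n) : ℝ≥0) ^ ((1:ℝ≥0∞)/2).toReal) with hKdef
  have hKpos : 0 < K := by
    apply NNReal.rpow_pos
    simpa using Nat.lt_of_lt_of_le Nat.zero_lt_one hn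
  have h1 : μH[(n:ℝ)] ((WithLp.equiv 2 (Fin n → ℝ)) '' Metric.ball 0 ε)
      ≤ (1 : ℝ≥0∞) ^ (n:ℝ) * μH[(n:ℝ)] (Metric.ball (0 : EuclideanSpace ℝ (Fin n)) ε) :=
    (PiLp.lipschitzWith_ofLp 2 (fun _ : Fin n => ℝ)).hausdorffMeasure_image_le
      (by positivity) _
  have h2 : Metric.ball (0 : Fin n → ℝ) (ε / K) ⊆
      (WithLp.equiv 2 (Fin n → ℝ)) '' Metric.ball 0 ε := by
    intro w hw
    refine ⟨(WithLp.equiv 2 (Fin n → ℝ)).symm w, ?_, by simp⟩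
    have h3 := hK.le_mul_dist ((WithLp.equiv 2 (Fin n → ℝ)).symm w) 0
    change dist ((WithLp.equiv 2 (Fin n → ℝ)).symm w) 0 ≤ (K:ℝ) * dist w (WithLp.ofLp (0 : EuclideanSpace ℝ (Fin n))) at h3
    have h0 : WithLp.ofLp (0 : EuclideanSpace ℝ (Fin n)) = 0 := rfl
    rw [h0] at h3
    rw [Metric.mem_ball] at hw ⊢
    calc dist ((WithLp.equiv 2 (Fin n → ℝ)).symm w) 0 ≤ K * dist w 0 := h3
      _ < K * (ε / K) := by
          exact mul_lt_mul_of_pos_left hw (by exact_mod_cast hKpos)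
      _ = ε := by field_simp
  have hvol : 0 < μH[(n:ℝ)] (Metric.ball (0 : Fin n → ℝ) (ε / K)) := by
    have hpi : (μH[(n:ℝ)] : Measure (Fin n → ℝ)) = volume := by
      simpa using (hausdorffMeasure_pi_real (ι := Fin n))
    rw [hpi]
    have : (0:ℝ) < ε / K := by positivity
    exact measure_ball_pos volume 0 this
  have h4 := (measure_mono h2).trans h1
  simpa using lt_of_lt_of_le hvol h4

lemma aux_hm_finite (n : ℕ) (R : ℝ) :
    μH[(n:ℝ)] (Metric.closedBall (0 : EuclideanSpace ℝ (Fin n)) R) < ⊤ := by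
  have hK := PiLp.antilipschitzWith_ofLp 2 (fun _ : Fin n => ℝ)
  have h1 := hK.le_hausdorffMeasure_image (d := (n:ℝ)) (by positivity)
    (Metric.closedBall (0 : EuclideanSpace ℝ (Fin n)) R)
  have h2 : (WithLp.equiv 2 (Fin n → ℝ)) '' Metric.closedBall 0 R ⊆
      Metric.closedBall (0 : Fin n → ℝ) R := by
    rintro w ⟨z, hz, rfl⟩
    rw [Metric.mem_closedBall] at hz ⊢
    have h3 := (PiLp.lipschitzWith_ofLp 2 (fun _ : Fin n => ℝ)).dist_le_mul z 0
    have h0 : WithLp.ofLp (0 : EuclideanSpace ℝ (Fin n)) = 0 := rfl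
    rw [h0] at h3
    simpa using h3.trans (by simpa using hz)
  have hpi : (μH[(n:ℝ)] : Measure (Fin n → ℝ)) = volume := by
    simpa using (hausdorffMeasure_pi_real (ι := Fin n))
  have hfin : μH[(n:ℝ)] ((WithLp.equiv 2 (Fin n → ℝ)) '' Metric.closedBall 0 R)
      < ⊤ := by
    refine lt_of_le_of_lt (measure_mono h2) ?_
    rw [hpi]
    exact measure_closedBall_lt_top
  refine lt_of_le_of_lt h1 ?_
  exact ENNReal.mul_lt_top (by simp) hfin

lemma aux_iso (d : ℕ) (V : Submodule ℝ (EuclideanSpace ℝ (Fin d)))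
    (c : EuclideanSpace ℝ (Fin d)) :
    ∃ φ : EuclideanSpace ℝ (Fin (finrank ℝ V)) → EuclideanSpace ℝ (Fin d),
      Isometry φ ∧ φ 0 = c ∧ (∀ w, φ w - c ∈ V) ∧
      (∀ v : EuclideanSpace ℝ (Fin d), v ∈ V → ∃ w, ‖w‖ = ‖v‖ ∧ φ w = c + v) := by
  set e : EuclideanSpace ℝ (Fin (finrank ℝ V)) ≃ₗᵢ[ℝ] V :=
    (stdOrthonormalBasis ℝ V).repr.symm with he
  refine ⟨fun w => c + (e w : EuclideanSpace ℝ (Fin d)), ?_, by simp, ?_, ?_⟩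
  · refine Isometry.of_dist_eq fun a b => ?_
    rw [dist_add_left, ← Subtype.dist_eq, e.dist_map]
  · intro w; simp
  · intro v hv
    exact ⟨e.symm ⟨v, hv⟩, by simp, by simp⟩

variable {d : ℕ} {k : Fin (d+1)}
  {x : Fin (d + 1) → EuclideanSpace ℝ (Fin d)}
  {lam : Fin (d + 1) → (EuclideanSpace ℝ (Fin d) →ᵃ[ℝ] ℝ)}

lemma aux_lam_comb (hlam : ∀ i j, lam i (x j) = if i = j then 1 else 0)
    (w : {i : Fin (d+1) // i ≠ k} → ℝ) (hw : ∑ i, w i = 1)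
    (j : Fin (d+1)) (hj : j ≠ k) :
    lam j (Finset.univ.affineCombination ℝ (fun i : {i : Fin (d+1) // i ≠ k} => x i) w)
      = w ⟨j, hj⟩ := by
  rw [Finset.map_affineCombination _ _ _ hw]
  rw [Finset.affineCombination_eq_linear_combination _ _ _ hw]
  rw [Fintype.sum_eq_single (⟨j, hj⟩ : {i : Fin (d+1) // i ≠ k})]
  · simp [hlam]
  · intro i hi
    have : lam j (x i) = 0 := by
      rw [hlam]
      simp only [ite_eq_right_iff]
      intro h
      exact (hi (Subtype.ext h.symm)).elim
    simp [Function.comp, this]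

lemma aux_mem_hull (hlam : ∀ i j, lam i (x j) = if i = j then 1 else 0)
    (y : EuclideanSpace ℝ (Fin d))
    (hy : y ∈ affineSpan ℝ (x '' {i | i ≠ k}))
    (hpos : ∀ i, i ≠ k → 0 ≤ lam i y) :
    y ∈ convexHull ℝ (x '' {i | i ≠ k}) := by
  rw [Set.image_eq_range] at hy ⊢
  obtain ⟨w, hw, rfl⟩ := eq_affineCombination_of_mem_affineSpan_of_fintype hy
  exact affineCombination_mem_convexHull
    (fun i _ => by
      have h1 := hpos i i.2
      exact h1.trans_eq (aux_lam_comb hlam w hw i i.2)) hw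

lemma aux_lam_nonneg {d : ℕ}
    {x : Fin (d + 1) → EuclideanSpace ℝ (Fin d)}
    {lam : Fin (d + 1) → (EuclideanSpace ℝ (Fin d) →ᵃ[ℝ] ℝ)}
    (hlam : ∀ i j, lam i (x j) = if i = j then 1 else 0)
    (j0 i : Fin (d+1)) :
    ∀ y ∈ convexHull ℝ (x '' {i | i ≠ j0}), 0 ≤ lam i y := by
  intro y hy
  have hconv : Convex ℝ ((lam i) ⁻¹' Set.Ici (0:ℝ)) :=
    (convex_Ici 0).affine_preimage (lam i)
  have hsub : x '' {i | i ≠ j0} ⊆ (lam i) ⁻¹' Set.Ici 0 := by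
    rintro _ ⟨j, _, rfl⟩
    simp only [Set.mem_preimage, Set.mem_Ici, hlam]
    split_ifs <;> norm_num
  exact convexHull_min hsub hconv hy

lemma aux_lam_zero {d : ℕ}
    {x : Fin (d + 1) → EuclideanSpace ℝ (Fin d)}
    {lam : Fin (d + 1) → (EuclideanSpace ℝ (Fin d) →ᵃ[ℝ] ℝ)}
    (hlam : ∀ i j, lam i (x j) = if i = j then 1 else 0)
    (j0 : Fin (d+1)) :
    ∀ y ∈ convexHull ℝ (x '' {i | i ≠ j0}), lam j0 y = 0 := by
  intro y hy
  have hconv : Convex ℝ ((lam j0) ⁻¹' ({0} : Set ℝ)) :=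
    (convex_singleton 0).affine_preimage (lam j0)
  have hsub : x '' {i | i ≠ j0} ⊆ (lam j0) ⁻¹' {0} := by
    rintro _ ⟨j, hj, rfl⟩
    simp only [Set.mem_preimage, Set.mem_singleton_iff, hlam]
    simp [Ne.symm hj]
  exact convexHull_min hsub hconv hy

lemma aux_measure (d : ℕ) (hd : 2 ≤ d)
    (x : Fin (d + 1) → EuclideanSpace ℝ (Fin d)) (hx : AffineIndependent ℝ x)
    (k : Fin (d + 1)) :
    (μH[(d:ℝ)-1] (convexHull ℝ (x '' {i | i ≠ k})) < ⊤) ∧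
    (∀ y1 ∈ affineSpan ℝ (x '' {i | i ≠ k}), ∀ ε > 0,
      ∃ W : Set (EuclideanSpace ℝ (Fin d)),
        W ⊆ Metric.ball y1 ε ∩ (affineSpan ℝ (x '' {i | i ≠ k}) : Set _) ∧
        0 < μH[(d:ℝ)-1] W) := by
  set A : Set (EuclideanSpace ℝ (Fin d)) := x '' {i | i ≠ k} with hA
  set V : Submodule ℝ (EuclideanSpace ℝ (Fin d)) := (affineSpan ℝ A).direction with hV
  have hai : AffineIndependent ℝ (fun i : ↥{i : Fin (d+1) | i ≠ k} => x ↑i) :=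
    hx.comp_embedding (Function.Embedding.subtype _)
  have hcard : Fintype.card ↥{i : Fin (d+1) | i ≠ k} = (d - 1) + 1 := by
    have : Fintype.card ↥{i : Fin (d+1) | i ≠ k} = d := by
      simp [Finset.filter_ne']
    omega
  have hfr : finrank ℝ V = d - 1 := by
    rw [hV, direction_affineSpan, hA, Set.image_eq_range]
    exact hai.finrank_vectorSpan hcard
  have hcast : (d:ℝ) - 1 = ((finrank ℝ V : ℕ) : ℝ) := by
    rw [hfr]
    have h1 : (1:ℕ) ≤ d := by omega
    rw [Nat.cast_sub h1]
    norm_num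
  constructor
  · -- finiteness
    obtain ⟨i0, hi0⟩ := Fintype.exists_ne_of_one_lt_card (by simp; omega) k
    have hcA : x i0 ∈ A := ⟨i0, hi0, rfl⟩
    have hcH : x i0 ∈ affineSpan ℝ A := subset_affineSpan ℝ A hcA
    obtain ⟨φ, hiso, hφ0, hφV, hφsurj⟩ := aux_iso d V (x i0)
    have hcomp : IsCompact (convexHull ℝ A) := (Set.toFinite A).isCompact_convexHull ℝ
    obtain ⟨R, hR⟩ := hcomp.isBounded.subset_closedBall (x i0)
    have hsub : convexHull ℝ A ⊆ φ '' Metric.closedBall 0 R := by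
      intro y hy
      have hyH : y ∈ affineSpan ℝ A := convexHull_subset_affineSpan A hy
      have hdir : y - x i0 ∈ V := by
        have := AffineSubspace.vsub_mem_direction hyH hcH
        simpa using this
      obtain ⟨w, hwn, hwe⟩ := hφsurj _ hdir
      refine ⟨w, ?_, ?_⟩
      · rw [Metric.mem_closedBall, dist_zero_right, hwn]
        have := hR hy
        rw [Metric.mem_closedBall, dist_eq_norm] at this
        exact this
      · rw [hwe]; abel
    refine lt_of_le_of_lt (measure_mono hsub) ?_
    rw [hcast, hiso.hausdorffMeasure_image (Or.inl (by positivity))]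
    exact aux_hm_finite _ R
  · intro y1 hy1 ε hε
    obtain ⟨φ, hiso, hφ0, hφV, hφsurj⟩ := aux_iso d V y1
    refine ⟨φ '' Metric.ball 0 ε, ?_, ?_⟩
    · rintro _ ⟨u, hu, rfl⟩
      constructor
      · rw [Metric.mem_ball]
        have : dist (φ u) (φ 0) = dist u 0 := hiso.dist_eq u 0
        rw [hφ0] at this
        rw [this]
        simpa using hu
      · have hmem : (φ u - y1) +ᵥ y1 ∈ affineSpan ℝ A :=
          AffineSubspace.vadd_mem_of_mem_direction (hφV u) hy1
        simpa using hmem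
    · rw [hcast, hiso.hausdorffMeasure_image (Or.inl (by positivity))]
      exact aux_hm_pos _ (by omega) hε
set_option maxHeartbeats 1000000 in
/-- Facet residual part of the solvability theorem: let `T ⊂ ℝ^d` (`d ≥ 2`) be
a nondegenerate `d`-simplex with vertices `x_0, …, x_d`, facets
`S_j = convexHull {x_i : i ≠ j}` carrying `(d-1)`-dimensional Hausdorff
measure, and cone functions `β_k = ∏_{i ≠ k} lam i`.  Let `R` be a polynomial
function of total degree at most `p` and, for each `j`, let `ρ_j` be a
polynomial function of total degree at most `q`.  Define the local residual
`r_T(v) = ∫_T R v dx + ∑_j ∫_{S_j} ρ_j v dσ_j`.  Then for each `k`: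
(i) `ρ_k` satisfies the local facet problem
`∫_{S_k} ρ_k β_k φ dσ_k = r_T(β_k φ) − ∫_T R β_k φ dx` for every polynomial
function `φ` of total degree at most `q`; and (ii) any polynomial function
`ρ'` of total degree at most `q` satisfying the same equations agrees with
`ρ_k` on `S_k`. -/
theorem facet_residual_uniquely_determined
    (d : ℕ) (hd : 2 ≤ d) (p q : ℕ)
    (x : Fin (d + 1) → EuclideanSpace ℝ (Fin d))
    (hx : AffineIndependent ℝ x)
    (lam : Fin (d + 1) → (EuclideanSpace ℝ (Fin d) →ᵃ[ℝ] ℝ))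
    (hlam : ∀ i j, lam i (x j) = if i = j then 1 else 0)
    (T : Set (EuclideanSpace ℝ (Fin d))) (hT : T = convexHull ℝ (Set.range x))
    (S : Fin (d + 1) → Set (EuclideanSpace ℝ (Fin d)))
    (hS : ∀ j, S j = convexHull ℝ (x '' {i | i ≠ j}))
    (β : Fin (d + 1) → EuclideanSpace ℝ (Fin d) → ℝ)
    (hβ : ∀ k, β k = fun y => ∏ i ∈ Finset.univ.erase k, lam i y)
    (P : MvPolynomial (Fin d) ℝ) (hPdeg : P.totalDegree ≤ p)
    (R : EuclideanSpace ℝ (Fin d) → ℝ)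
    (hR : R = fun y => MvPolynomial.eval (fun i => y i) P)
    (Pρ : Fin (d + 1) → MvPolynomial (Fin d) ℝ)
    (hPρdeg : ∀ j, (Pρ j).totalDegree ≤ q)
    (ρ : Fin (d + 1) → EuclideanSpace ℝ (Fin d) → ℝ)
    (hρ : ∀ j, ρ j = fun y => MvPolynomial.eval (fun i => y i) (Pρ j))
    (rT : (EuclideanSpace ℝ (Fin d) → ℝ) → ℝ)
    (hrT : ∀ v, rT v = (∫ y in T, R y * v y)
        + ∑ j, ∫ y in S j, ρ j y * v y ∂μH[(d : ℝ) - 1])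
    (k : Fin (d + 1)) :
    (∀ Q : MvPolynomial (Fin d) ℝ, Q.totalDegree ≤ q →
      (∫ y in S k, ρ k y * β k y * MvPolynomial.eval (fun i => y i) Q
          ∂μH[(d : ℝ) - 1])
        = rT (fun y => β k y * MvPolynomial.eval (fun i => y i) Q)
          - ∫ y in T, R y * β k y * MvPolynomial.eval (fun i => y i) Q) ∧
    (∀ P' : MvPolynomial (Fin d) ℝ, P'.totalDegree ≤ q →
      (∀ Q : MvPolynomial (Fin d) ℝ, Q.totalDegree ≤ q →
        (∫ y in S k,
            MvPolynomial.eval (fun i => y i) P' * β k y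
              * MvPolynomial.eval (fun i => y i) Q ∂μH[(d : ℝ) - 1])
          = rT (fun y => β k y * MvPolynomial.eval (fun i => y i) Q)
            - ∫ y in T, R y * β k y * MvPolynomial.eval (fun i => y i) Q) →
      ∀ y ∈ S k, MvPolynomial.eval (fun i => y i) P' = ρ k y) := by
  have hSmeas : ∀ j, MeasurableSet (S j) := by
    intro j
    rw [hS j]
    exact ((Set.toFinite _).isCompact_convexHull ℝ).isClosed.measurableSet
  have hzero : ∀ j, j ≠ k → ∀ v : EuclideanSpace ℝ (Fin d) → ℝ,
      (∫ y in S j, ρ j y * (β k y * v y) ∂μH[(d:ℝ)-1]) = 0 := by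
    intro j hj v
    have heq : Set.EqOn (fun y => ρ j y * (β k y * v y)) (fun _ => (0:ℝ)) (S j) := by
      intro y hy
      have hz : lam j y = 0 := aux_lam_zero hlam j y (by rwa [hS j] at hy)
      have hb0 : β k y = 0 := by
        rw [hβ k]
        exact Finset.prod_eq_zero (Finset.mem_erase.mpr ⟨hj, Finset.mem_univ j⟩) hz
      simp [hb0]
    rw [setIntegral_congr_fun (hSmeas j) heq]
    simp
  have part1 : ∀ Q : MvPolynomial (Fin d) ℝ,
      (∫ y in S k, ρ k y * β k y * MvPolynomial.eval (fun i => y i) Q ∂μH[(d : ℝ) - 1])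
        = rT (fun y => β k y * MvPolynomial.eval (fun i => y i) Q)
          - ∫ y in T, R y * β k y * MvPolynomial.eval (fun i => y i) Q := by
    intro Q
    simp only [hrT]
    rw [Finset.sum_eq_single k (fun j _ hj => hzero j hj _)
      (fun h => absurd (Finset.mem_univ k) h)]
    simp_rw [mul_assoc]
    ring
  refine ⟨fun Q _ => part1 Q, ?_⟩
  intro P' hP'deg hyp y0 hy0
  by_contra hne
  -- continuity helpers
  have hcont_eval : ∀ Pp : MvPolynomial (Fin d) ℝ,
      Continuous (fun y : EuclideanSpace ℝ (Fin d) =>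
        MvPolynomial.eval (fun i => y i) Pp) := by
    intro Pp
    have hcp : Continuous fun v : Fin d → ℝ => MvPolynomial.eval v Pp :=
      MvPolynomial.continuous_eval Pp
    have hco : Continuous fun y : EuclideanSpace ℝ (Fin d) => (fun i => y i : Fin d → ℝ) :=
      PiLp.continuous_ofLp 2 (fun _ : Fin d => ℝ)
    exact hcp.comp hco
  have hcontρ : Continuous (ρ k) := by rw [hρ k]; exact hcont_eval _
  have hcontβ : Continuous (β k) := by
    rw [hβ k]
    exact continuous_finset_prod _ (fun i _ => (lam i).continuous_of_finiteDimensional)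
  set f : EuclideanSpace ℝ (Fin d) → ℝ :=
    fun y => MvPolynomial.eval (fun i => y i) P' - ρ k y with hf
  have hcontf : Continuous f := (hcont_eval P').sub hcontρ
  have hfy0 : f y0 ≠ 0 := sub_ne_zero.mpr hne
  -- measure facts
  obtain ⟨hfin, hpos⟩ := aux_measure d hd x hx k
  have hμfin : μH[(d:ℝ)-1] (S k) ≠ ⊤ := by rw [hS k]; exact hfin.ne
  have hcompS : IsCompact (S k) := by
    rw [hS k]; exact (Set.toFinite _).isCompact_convexHull ℝ
  have hint : ∀ g : EuclideanSpace ℝ (Fin d) → ℝ, Continuous g →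
      IntegrableOn g (S k) μH[(d:ℝ)-1] := by
    intro g hg
    obtain ⟨M, hM⟩ := hcompS.exists_bound_of_continuousOn hg.continuousOn
    exact Measure.integrableOn_of_bounded hμfin hg.aestronglyMeasurable
      ((ae_restrict_iff' (hSmeas k)).2 (Filter.Eventually.of_forall hM))
  -- the test polynomial
  have hQ0deg : (P' - Pρ k).totalDegree ≤ q :=
    (MvPolynomial.totalDegree_sub _ _).trans (max_le hP'deg (hPρdeg k))
  have hevalQ0 : ∀ y : EuclideanSpace ℝ (Fin d),
      MvPolynomial.eval (fun i => y i) (P' - Pρ k) = f y := by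
    intro y
    rw [map_sub, hf, hρ k]
  have h1 := hyp (P' - Pρ k) hQ0deg
  have h2 := part1 (P' - Pρ k)
  set F : EuclideanSpace ℝ (Fin d) → ℝ := fun y => f y * (β k y * f y) with hF
  have hcontF : Continuous F := hcontf.mul (hcontβ.mul hcontf)
  have h3 : (∫ y in S k, F y ∂μH[(d:ℝ)-1]) = 0 := by
    have e1 : F = fun y =>
        (MvPolynomial.eval (fun i => y i) P' * β k y
            * MvPolynomial.eval (fun i => y i) (P' - Pρ k))
          - (ρ k y * β k y * MvPolynomial.eval (fun i => y i) (P' - Pρ k)) := by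
      funext y
      rw [hF]
      simp only [hevalQ0 y, hf]
      ring
    have hc1 : Continuous (fun y : EuclideanSpace ℝ (Fin d) =>
        MvPolynomial.eval (fun i => y i) P' * β k y
          * MvPolynomial.eval (fun i => y i) (P' - Pρ k)) :=
      ((hcont_eval P').mul hcontβ).mul (hcont_eval _)
    have hc2 : Continuous (fun y : EuclideanSpace ℝ (Fin d) =>
        ρ k y * β k y * MvPolynomial.eval (fun i => y i) (P' - Pρ k)) :=
      (hcontρ.mul hcontβ).mul (hcont_eval _)
    rw [e1, integral_sub (hint _ hc1) (hint _ hc2), h1, h2]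
    ring
  -- nonnegativity and a.e. vanishing
  have hβnonneg : ∀ y ∈ S k, 0 ≤ β k y := by
    intro y hy
    rw [hβ k]
    exact Finset.prod_nonneg fun i _ =>
      aux_lam_nonneg hlam k i y (by rwa [hS k] at hy)
  have h5 : F =ᵐ[μH[(d:ℝ)-1].restrict (S k)] 0 := by
    refine (setIntegral_eq_zero_iff_of_nonneg_ae ?_ (hint _ hcontF)).1 h3
    refine (ae_restrict_iff' (hSmeas k)).2 (Filter.Eventually.of_forall fun y hy => ?_)
    have h := mul_nonneg (hβnonneg y hy) (mul_self_nonneg (f y))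
    exact le_of_le_of_eq h (by rw [hF]; ring)
  have h6 : μH[(d:ℝ)-1] ({y | F y ≠ 0} ∩ S k) = 0 := by
    have := MeasureTheory.ae_iff.1 h5
    rw [Measure.restrict_apply' (hSmeas k)] at this
    simpa using this
  -- the interior point z of the facet
  have hcard : Fintype.card ↥{i : Fin (d+1) | i ≠ k} = d := by
    simp [Finset.filter_ne']
  have hwz : ∑ _i : ↥{i : Fin (d+1) | i ≠ k}, ((d:ℝ)⁻¹) = 1 := by
    rw [Finset.sum_const, Finset.card_univ, hcard, nsmul_eq_mul]
    field_simp
  set z := Finset.univ.affineCombination ℝ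
    (fun i : ↥{i : Fin (d+1) | i ≠ k} => x ↑i) (fun _ => (d:ℝ)⁻¹) with hz
  have hzS : z ∈ S k := by
    rw [hS k, Set.image_eq_range]
    exact affineCombination_mem_convexHull (fun _ _ => by positivity) hwz
  have hlamz : ∀ i, i ≠ k → lam i z = (d:ℝ)⁻¹ := fun i hi =>
    aux_lam_comb hlam _ hwz i hi
  -- move y0 slightly into the relative interior along the segment to z
  set γ : ℝ → EuclideanSpace ℝ (Fin d) := fun t => AffineMap.lineMap z y0 t with hγ
  have hγcont : Continuous γ := by
    have e : γ = fun t : ℝ => t • (y0 - z) + z := by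
      funext t
      simp only [hγ, AffineMap.lineMap_apply, vsub_eq_sub, vadd_eq_add]
    rw [e]
    exact (continuous_id.smul continuous_const).add continuous_const
  have hγ1 : γ 1 = y0 := by simp only [hγ]; simp
  have hopen : IsOpen ((f ∘ γ) ⁻¹' ({0}ᶜ : Set ℝ)) :=
    isOpen_compl_singleton.preimage (hcontf.comp hγcont)
  have h1mem : (1:ℝ) ∈ (f ∘ γ) ⁻¹' ({0}ᶜ : Set ℝ) := by
    simp only [Set.mem_preimage, Function.comp_apply, hγ1, Set.mem_compl_iff,
      Set.mem_singleton_iff]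
    exact hfy0
  obtain ⟨δ, hδpos, hδ⟩ := Metric.isOpen_iff.1 hopen 1 h1mem
  set t1 : ℝ := max 0 (1 - δ/2) with ht1
  have ht1a : 0 ≤ t1 := le_max_left _ _
  have ht1b : 1 - δ/2 ≤ t1 := le_max_right _ _
  have ht1c : t1 < 1 := by
    rw [ht1]
    apply max_lt one_pos
    linarith
  have ht1ball : t1 ∈ Metric.ball (1:ℝ) δ := by
    rw [Metric.mem_ball, Real.dist_eq, abs_lt]
    constructor <;> [linarith; linarith]
  set y1 := γ t1 with hy1
  have hfy1 : f y1 ≠ 0 := by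
    have := hδ ht1ball
    simpa using this
  have hy1S : y1 ∈ S k := by
    rw [hS k]
    rw [hS k] at hy0 hzS
    exact (convex_convexHull ℝ _).lineMap_mem hzS hy0 ⟨ht1a, ht1c.le⟩
  have hlamy1 : ∀ i, i ≠ k → 0 < lam i y1 := by
    intro i hi
    have h0 : lam i y1 = (lam i) (AffineMap.lineMap z y0 t1) := rfl
    have he : lam i y1 = t1 * (lam i y0 - lam i z) + lam i z := by
      rw [h0, AffineMap.apply_lineMap, AffineMap.lineMap_apply, smul_eq_mul,
        vsub_eq_sub, vadd_eq_add]
    rw [he, hlamz i hi]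
    have hb : 0 ≤ lam i y0 := aux_lam_nonneg hlam k i y0 (by rwa [hS k] at hy0)
    have ha : (0:ℝ) < (d:ℝ)⁻¹ := by positivity
    nlinarith [mul_nonneg ht1a hb, mul_pos (sub_pos.mpr ht1c) ha]
  -- an open set where F does not vanish
  set O : Set (EuclideanSpace ℝ (Fin d)) :=
    (f ⁻¹' ({0}ᶜ : Set ℝ)) ∩ ⋂ i ∈ Finset.univ.erase k, (lam i) ⁻¹' Set.Ioi (0:ℝ)
    with hO
  have hOopen : IsOpen O := by
    refine (isOpen_compl_singleton.preimage hcontf).inter ?_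
    exact isOpen_biInter_finset fun i _ =>
      isOpen_Ioi.preimage (lam i).continuous_of_finiteDimensional
  have hy1O : y1 ∈ O := by
    refine ⟨hfy1, Set.mem_iInter₂.2 fun i hi => ?_⟩
    exact hlamy1 i (Finset.mem_erase.1 hi).1
  obtain ⟨ε, hεpos, hball⟩ := Metric.isOpen_iff.1 hOopen y1 hy1O
  have hy1H : y1 ∈ affineSpan ℝ (x '' {i | i ≠ k}) :=
    convexHull_subset_affineSpan _ (by rwa [hS k] at hy1S)
  obtain ⟨W, hWsub, hWpos⟩ := hpos y1 hy1H ε hεpos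
  have hW2 : W ⊆ {y | F y ≠ 0} ∩ S k := by
    intro w hw
    obtain ⟨hwball, hwH⟩ := hWsub hw
    have hwO : w ∈ O := hball hwball
    obtain ⟨hwf, hwlam⟩ := hwO
    have hwlam' : ∀ i, i ≠ k → 0 < lam i w := fun i hi =>
      Set.mem_iInter₂.1 hwlam i (Finset.mem_erase.2 ⟨hi, Finset.mem_univ i⟩)
    have hwS : w ∈ S k := by
      rw [hS k]
      exact aux_mem_hull hlam w hwH fun i hi => (hwlam' i hi).le
    have hwβ : 0 < β k w := by
      rw [hβ k]
      exact Finset.prod_pos fun i hi => hwlam' i (Finset.mem_erase.1 hi).1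
    have hwf' : f w ≠ 0 := hwf
    refine ⟨?_, hwS⟩
    show F w ≠ 0
    rw [hF]
    exact mul_ne_zero hwf' (mul_ne_zero hwβ.ne' hwf')
  exact hWpos.ne' (le_antisymm ((measure_mono hW2).trans h6.le) zero_le)
end
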